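/- arXiv:2207.06964 — 2 statements merged into one kernel-verified Lean document; each statement's English description precedes it below -/
import Mathlib

section
/- The function h(x,y) = e^{-α/x - α/y} satisfies: for all x, y > α, the quadratic form (x, y)·H(x,y)·(x, y)ᵀ is strictly negative, where H is the Hessian of h at (x,y). -/
/-- The quadratic form `(x, y)·H(x,y)·(x, y)ᵀ` of the Hessian of
`h(x,y) = exp (-α/x - α/y)`, with entries
`∂²h/∂x² = (α/x³)(α/x − 2)h`, `∂²h/∂y² = (α/y³)(α/y − 2)h`,
`∂²h/∂x∂y = (α²/(x²y²))h`, is strictly negative for `x, y > α`. -/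
theorem hessian_quadratic_form_neg (α : ℝ) (hα : 0 < α) (x y : ℝ)
    (hx : α < x) (hy : α < y) :
    x ^ 2 * ((α / x ^ 3) * (α / x - 2) * Real.exp (-α / x - α / y))
      + 2 * (x * y * ((α ^ 2 / (x ^ 2 * y ^ 2)) * Real.exp (-α / x - α / y)))
      + y ^ 2 * ((α / y ^ 3) * (α / y - 2) * Real.exp (-α / x - α / y)) < 0 := by
  have hx0 : 0 < x := hα.trans hx
  have hy0 : 0 < y := hα.trans hy
  have hE : 0 < Real.exp (-α / x - α / y) := Real.exp_pos _
  set E := Real.exp (-α / x - α / y) with hEdef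
  have key : x ^ 2 * ((α / x ^ 3) * (α / x - 2)) + 2 * (x * y * (α ^ 2 / (x ^ 2 * y ^ 2)))
      + y ^ 2 * ((α / y ^ 3) * (α / y - 2)) < 0 := by
    have h1 : x ^ 2 * ((α / x ^ 3) * (α / x - 2)) + 2 * (x * y * (α ^ 2 / (x ^ 2 * y ^ 2)))
        + y ^ 2 * ((α / y ^ 3) * (α / y - 2))
        = (α / x + α / y) * ((α / x + α / y) - 2) := by
      field_simp
      ring
    rw [h1]
    have hux : α / x < 1 := (div_lt_one hx0).mpr hx
    have huy : α / y < 1 := (div_lt_one hy0).mpr hy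
    have hux0 : 0 < α / x := div_pos hα hx0
    have huy0 : 0 < α / y := div_pos hα hy0
    nlinarith
  nlinarith [mul_pos (neg_pos.mpr key) hE]
end

section
/- Let f : [0,∞) → [0,1] be strictly decreasing. Let y₁,...,y_K be points in an interval [I₀ − L, I₀ + L], symmetric about I₀ (i.e., the multiset {y_k − I₀} equals {I₀ − y_k}). If y, y' are two of these points with |y − I₀| < |y' − I₀|, then Σ_{k: y_k ≠ y} f(|y_k − y|) > Σ_{k: y_k ≠ y'} f(|y_k − y'|). -/
open Finset

private lemma shift_sum' (g : ℕ → ℝ) (a b c : ℕ) :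
    ∑ d ∈ Finset.Ioc (a + c) (b + c), g d = ∑ d ∈ Finset.Ioc a b, g (d + c) := by
  rw [← Finset.map_add_right_Ioc, Finset.sum_map]
  rfl

private lemma key_lemma' (g : ℕ → ℝ) (hg : ∀ m n : ℕ, 1 ≤ m → m < n → g n < g m)
    (a b a' b' : ℕ) (h1 : a' < a) (h2 : a ≤ b) (h3 : b < b')
    (hsum : a + b = a' + b') :
    (∑ d ∈ Finset.Ioc 0 a', g d) + ∑ d ∈ Finset.Ioc 0 b', g d
      < (∑ d ∈ Finset.Ioc 0 a, g d) + ∑ d ∈ Finset.Ioc 0 b, g d := by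
  have ha : (∑ d ∈ Finset.Ioc 0 a', g d) + ∑ d ∈ Finset.Ioc a' a, g d
      = ∑ d ∈ Finset.Ioc 0 a, g d :=
    Finset.sum_Ioc_consecutive _ (Nat.zero_le _) h1.le
  have hb : (∑ d ∈ Finset.Ioc 0 b, g d) + ∑ d ∈ Finset.Ioc b b', g d
      = ∑ d ∈ Finset.Ioc 0 b', g d :=
    Finset.sum_Ioc_consecutive _ (Nat.zero_le _) h3.le
  have hshift : ∑ d ∈ Finset.Ioc b b', g d
      = ∑ d ∈ Finset.Ioc a' a, g (d + (b - a')) := by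
    have h := shift_sum' g a' a (b - a')
    rw [show a' + (b - a') = b by omega, show a + (b - a') = b' by omega] at h
    exact h
  have hlt : ∑ d ∈ Finset.Ioc a' a, g (d + (b - a')) < ∑ d ∈ Finset.Ioc a' a, g d := by
    apply Finset.sum_lt_sum_of_nonempty (Finset.nonempty_Ioc.2 h1)
    intro d hd
    rw [Finset.mem_Ioc] at hd
    exact hg d (d + (b - a')) (by omega) (by omega)
  linarith

private lemma sum_split' (f : ℝ → ℝ) {K : ℕ} (hK : 2 ≤ K) {δ : ℝ} (hδ : 0 < δ)
    (I₀ L : ℝ) (p : Fin K → ℝ) (hp : ∀ k : Fin K, p k = I₀ - L + (k : ℝ) * δ)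
    (i : Fin K) :
    (∑ k ∈ Finset.univ.filter (fun k => p k ≠ p i), f (|p k - p i|))
      = (∑ d ∈ Finset.Ioc 0 i.val, f (δ * d))
        + ∑ d ∈ Finset.Ioc 0 (K - 1 - i.val), f (δ * d) := by
  have hdiff : ∀ k l : Fin K, p k - p l = ((k : ℝ) - l) * δ := by
    intro k l; rw [hp, hp]; ring
  have hfilter : Finset.univ.filter (fun k : Fin K => p k ≠ p i)
      = Finset.univ.filter (fun k : Fin K => k ≠ i) := by
    apply Finset.filter_congr
    intro k _
    simp only [ne_eq, eq_iff_iff]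
    constructor
    · intro h h'; exact h (by rw [h'])
    · intro h h'
      apply h
      have h0 : ((k : ℝ) - i) * δ = 0 := by rw [← hdiff k i, h', sub_self]
      have : (k.val : ℝ) = i.val := by
        rcases mul_eq_zero.1 h0 with h2 | h2
        · linarith
        · exact absurd h2 hδ.ne'
      exact Fin.ext (Nat.cast_injective this)
  rw [hfilter]
  have hsplit : Finset.univ.filter (fun k : Fin K => k ≠ i)
      = (Finset.univ.filter (fun k : Fin K => k.val < i.val))
        ∪ (Finset.univ.filter (fun k : Fin K => i.val < k.val)) := by
    ext k
    simp only [Finset.mem_filter, Finset.mem_union, Finset.mem_univ, true_and, ne_eq,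
      Fin.ext_iff]
    omega
  have hdisj : Disjoint (Finset.univ.filter (fun k : Fin K => k.val < i.val))
      (Finset.univ.filter (fun k : Fin K => i.val < k.val)) := by
    rw [Finset.disjoint_left]
    intro k hk1 hk2
    simp only [Finset.mem_filter] at hk1 hk2
    omega
  rw [hsplit, Finset.sum_union hdisj]
  congr 1
  · apply Finset.sum_nbij' (i := fun k : Fin K => i.val - k.val)
      (j := fun d : ℕ => (⟨i.val - d, lt_of_le_of_lt (Nat.sub_le _ _) i.isLt⟩ : Fin K))
    · intro k hk
      simp only [Finset.mem_filter] at hk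
      simp only [Finset.mem_Ioc]
      omega
    · intro d hd
      simp only [Finset.mem_Ioc] at hd
      simp only [Finset.mem_filter, Finset.mem_univ, true_and]
      omega
    · intro k hk
      simp only [Finset.mem_filter] at hk
      apply Fin.ext
      simp only []
      omega
    · intro d hd
      simp only [Finset.mem_Ioc] at hd
      simp only []
      omega
    · intro k hk
      simp only [Finset.mem_filter, Finset.mem_univ, true_and] at hk
      rw [hdiff]
      congr 1
      rw [abs_mul, abs_of_pos hδ, abs_sub_comm,
        abs_of_nonneg (by
          have : (k.val : ℝ) ≤ i.val := by exact_mod_cast hk.le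
          linarith)]
      rw [Nat.cast_sub hk.le]
      ring
  · apply Finset.sum_nbij' (i := fun k : Fin K => k.val - i.val)
      (j := fun d : ℕ => (⟨(i.val + d) % K, Nat.mod_lt _ (by omega)⟩ : Fin K))
    · intro k hk
      simp only [Finset.mem_filter] at hk
      simp only [Finset.mem_Ioc]
      have := k.isLt
      omega
    · intro d hd
      simp only [Finset.mem_Ioc] at hd
      simp only [Finset.mem_filter, Finset.mem_univ, true_and]
      have hi := i.isLt
      rw [Nat.mod_eq_of_lt (by omega)]
      omega
    · intro k hk
      simp only [Finset.mem_filter, Finset.mem_univ, true_and] at hk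
      apply Fin.ext
      have := k.isLt
      simp only []
      rw [Nat.mod_eq_of_lt (by omega)]
      omega
    · intro d hd
      simp only [Finset.mem_Ioc] at hd
      have hi := i.isLt
      simp only []
      rw [Nat.mod_eq_of_lt (by omega)]
      omega
    · intro k hk
      simp only [Finset.mem_filter, Finset.mem_univ, true_and] at hk
      rw [hdiff]
      congr 1
      rw [abs_mul, abs_of_pos hδ,
        abs_of_nonneg (by
          have : (i.val : ℝ) ≤ k.val := by exact_mod_cast hk.le
          linarith)]
      rw [Nat.cast_sub hk.le]
      ring

theorem closer_agent_higher_total_interest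
    (f : ℝ → ℝ) (hf : StrictAntiOn f (Set.Ici 0))
    (hf01 : ∀ x : ℝ, 0 ≤ x → f x ∈ Set.Icc (0 : ℝ) 1)
    (K : ℕ) (hK : 2 ≤ K) (I₀ L : ℝ) (hL : 0 < L)
    (p : Fin K → ℝ)
    (hp : ∀ k : Fin K, p k = I₀ - L + (k : ℝ) * (2 * L / ((K : ℝ) - 1)))
    (i j : Fin K) (hij : |p i - I₀| < |p j - I₀|) :
    (∑ k ∈ Finset.univ.filter (fun k => p k ≠ p i), f (|p k - p i|))
      > ∑ k ∈ Finset.univ.filter (fun k => p k ≠ p j), f (|p k - p j|) := by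
  set δ : ℝ := 2 * L / ((K : ℝ) - 1) with hδdef
  have hK1 : (1 : ℝ) < K := by exact_mod_cast Nat.lt_of_lt_of_le one_lt_two hK
  have hδ : 0 < δ := by
    apply div_pos (by linarith)
    linarith
  set N := K - 1 with hN
  have hNc : ((N : ℕ) : ℝ) = (K : ℝ) - 1 := by
    rw [hN, Nat.cast_sub (by omega)]
    simp
  -- distances from center
  have hδL : δ * ((K : ℝ) - 1) = 2 * L := by
    rw [hδdef]; exact div_mul_cancel₀ _ (ne_of_gt (by linarith))
  have hPI : ∀ k : Fin K, p k - I₀ = δ / 2 * (2 * (k : ℝ) - ((K : ℝ) - 1)) := by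
    intro k
    rw [hp k]
    linear_combination (1/2 : ℝ) * hδL
  have habs : ∀ k : Fin K, |p k - I₀| = δ / 2 * |2 * (k : ℝ) - ((K : ℝ) - 1)| := by
    intro k
    rw [hPI k, abs_mul, abs_of_pos (by linarith)]
  have hij2 : |2 * ((i : Fin K) : ℝ) - ((K : ℝ) - 1)| < |2 * ((j : Fin K) : ℝ) - ((K : ℝ) - 1)| := by
    rw [habs i, habs j] at hij
    exact lt_of_mul_lt_mul_left hij (by linarith)
  have hint : (2 * (i.val : ℤ) - N).natAbs < (2 * (j.val : ℤ) - N).natAbs := by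
    have h1 : |((2 * (i.val : ℤ) - N : ℤ) : ℝ)| < |((2 * (j.val : ℤ) - N : ℤ) : ℝ)| := by
      push_cast
      rw [hNc]
      exact hij2
    rw [← Int.cast_abs, ← Int.cast_abs, Int.cast_lt] at h1
    rw [Int.abs_eq_natAbs, Int.abs_eq_natAbs, Int.ofNat_lt] at h1
    exact h1
  have hiN : i.val ≤ N := by have := i.isLt; omega
  have hjN : j.val ≤ N := by have := j.isLt; omega
  set a := min i.val (N - i.val) with hadef
  set b := max i.val (N - i.val) with hbdef
  set a' := min j.val (N - j.val) with ha'def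
  set b' := max j.val (N - j.val) with hb'def
  have h1 : a' < a := by omega
  have h2 : a ≤ b := min_le_max
  have h3 : b < b' := by omega
  have hsum : a + b = a' + b' := by omega
  have hg : ∀ m n : ℕ, 1 ≤ m → m < n → f (δ * n) < f (δ * m) := by
    intro m n hm hmn
    apply hf (Set.mem_Ici.2 (by positivity)) (Set.mem_Ici.2 (by positivity))
    have : (m : ℝ) < n := by exact_mod_cast hmn
    nlinarith
  have key := key_lemma' (fun d => f (δ * d)) hg a b a' b' h1 h2 h3 hsum
  have reorder : ∀ m n : ℕ, (∑ d ∈ Finset.Ioc 0 m, f (δ * d)) + ∑ d ∈ Finset.Ioc 0 n, f (δ * d)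
      = (∑ d ∈ Finset.Ioc 0 (min m n), f (δ * d)) + ∑ d ∈ Finset.Ioc 0 (max m n), f (δ * d) := by
    intro m n
    rcases le_total m n with h | h
    · rw [min_eq_left h, max_eq_right h]
    · rw [min_eq_right h, max_eq_left h, add_comm]
  rw [sum_split' f hK hδ I₀ L p hp i, sum_split' f hK hδ I₀ L p hp j]
  rw [show K - 1 - i.val = N - i.val from rfl, show K - 1 - j.val = N - j.val from rfl]
  rw [reorder i.val (N - i.val), reorder j.val (N - j.val)]
  exact key
end
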